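/- Fix a space-like covector η = (η⁰, η') on Minkowski space ℝ^{3+1} (so |η⁰| < |η'|, η' ≠ 0) and a point x. A symmetric 2-tensor f ∈ Sym²(ℝ⁴) satisfies f_{jk} θ^j θ^k = 0 for every θ = (1, v) with v ∈ S¹_η = {v ∈ S² : η⁰ + η'·v = 0} if and only if f belongs to the 5-dimensional subspace N = {c g + η ⊗ w + w ⊗ η : c ∈ ℝ, w ∈ ℝ⁴}, where g = diag(−1, 1, 1, 1). -/

import Mathlib

private lemma stmt6_circle5 (C0 C1 C2 C3 C4 C5 r : ℝ) (hr : 0 < r)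
    (h : ∀ x y : ℝ, x ^ 2 + y ^ 2 = r ^ 2 →
      C0 + C1 * x + C2 * y + C3 * x ^ 2 + C4 * (x * y) + C5 * y ^ 2 = 0) :
    C1 = 0 ∧ C2 = 0 ∧ C4 = 0 ∧ C0 + C3 * r ^ 2 = 0 ∧ C0 + C5 * r ^ 2 = 0 := by
  have h1 := h r 0 (by ring)
  have h2 := h (-r) 0 (by ring)
  have h3 := h 0 r (by ring)
  have h4 := h 0 (-r) (by ring)
  have hs2 : Real.sqrt 2 ^ 2 = 2 := Real.sq_sqrt (by norm_num)
  have h5 := h (r / Real.sqrt 2) (r / Real.sqrt 2) (by rw [div_pow, hs2]; ring)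
  have hr2 : (0:ℝ) < r ^ 2 := by positivity
  have hC1 : C1 = 0 := by
    have hh : C1 * r = 0 := by linear_combination (1/2 : ℝ) * h1 - (1/2 : ℝ) * h2
    rcases mul_eq_zero.mp hh with h | h
    · exact h
    · exact absurd h hr.ne'
  have hC2 : C2 = 0 := by
    have hh : C2 * r = 0 := by linear_combination (1/2 : ℝ) * h3 - (1/2 : ℝ) * h4
    rcases mul_eq_zero.mp hh with h | h
    · exact h
    · exact absurd h hr.ne'
  have h03 : C0 + C3 * r ^ 2 = 0 := by linear_combination (1/2 : ℝ) * h1 + (1/2 : ℝ) * h2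
  have h05 : C0 + C5 * r ^ 2 = 0 := by linear_combination (1/2 : ℝ) * h3 + (1/2 : ℝ) * h4
  have hx2 : (r / Real.sqrt 2) ^ 2 = r ^ 2 / 2 := by rw [div_pow, hs2]
  have hxx : (r / Real.sqrt 2) * (r / Real.sqrt 2) = r ^ 2 / 2 := by rw [← pow_two]; exact hx2
  have h5' : C0 + C1 * (r / Real.sqrt 2) + C2 * (r / Real.sqrt 2)
      + (C3 + C4 + C5) * (r ^ 2 / 2) = 0 := by
    linear_combination h5 - (C3 + C5) * hx2 - C4 * hxx
  have hC4 : C4 = 0 := by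
    have hh : C4 * r ^ 2 = 0 := by
      linear_combination 2 * h5' - h03 - h05 - (2 * (r / Real.sqrt 2)) * hC1
        - (2 * (r / Real.sqrt 2)) * hC2
    rcases mul_eq_zero.mp hh with h | h
    · exact h
    · exact absurd h hr2.ne'
  exact ⟨hC1, hC2, hC4, h03, h05⟩

private lemma stmt6_forward
    (η0 L : ℝ) (η' e a b : Fin 3 → ℝ) (f : Matrix (Fin 4) (Fin 4) ℝ)
    (hfs : ∀ x y, f x y = f y x)
    (hL : 0 < L) (hsp : η0 ^ 2 < L ^ 2) (hLe : ∀ i, η' i = L * e i)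
    (hee : ∑ m, e m * e m = 1) (haa : ∑ m, a m * a m = 1) (hbb : ∑ m, b m * b m = 1)
    (hea : ∑ m, e m * a m = 0) (heb : ∑ m, e m * b m = 0) (hab : ∑ m, a m * b m = 0)
    (hcompl : ∀ (x : Fin 3 → ℝ) (m : Fin 3),
      x m = (∑ n, e n * x n) * e m + (∑ n, a n * x n) * a m + (∑ n, b n * x n) * b m)
    (H : ∀ v : Fin 3 → ℝ, (∑ i, v i ^ 2 = 1) → (η0 + ∑ i, η' i * v i = 0) →
        ∑ j, ∑ k, f j k * (Fin.cons 1 v : Fin 4 → ℝ) j * (Fin.cons 1 v : Fin 4 → ℝ) k = 0) :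
    ∃ (c : ℝ) (w : Fin 4 → ℝ), ∀ j k, f j k =
        c * (Matrix.diagonal (Fin.cons (-1) (fun _ : Fin 3 => 1)) : Matrix (Fin 4) (Fin 4) ℝ) j k
          + (Fin.cons η0 η' : Fin 4 → ℝ) j * w k + w j * (Fin.cons η0 η' : Fin 4 → ℝ) k := by
  have hL' : L ≠ 0 := ne_of_gt hL
  obtain ⟨k, hk, hk2⟩ : ∃ k, L * k = -η0 ∧ k ^ 2 < 1 :=
    ⟨-η0 / L, by field_simp, by
      have hq : (-η0 / L) ^ 2 = η0 ^ 2 / L ^ 2 := by ring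
      rw [hq]; exact (div_lt_one (by positivity)).mpr hsp⟩
  obtain ⟨r, hr2, hr0⟩ : ∃ r, r ^ 2 = 1 - k ^ 2 ∧ 0 < r :=
    ⟨Real.sqrt (1 - k ^ 2), Real.sq_sqrt (by linarith), Real.sqrt_pos.mpr (by linarith)⟩
  obtain ⟨p, hp⟩ : ∃ p, (∑ m, e m * ∑ n, e n * f m.succ n.succ)
      = (∑ m, a m * ∑ n, a n * f m.succ n.succ) + 2 * L * p :=
    ⟨((∑ m, e m * ∑ n, e n * f m.succ n.succ)
       - (∑ m, a m * ∑ n, a n * f m.succ n.succ)) / (2 * L), by field_simp; ring⟩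
  obtain ⟨q, hq⟩ : ∃ q, (∑ m, e m * ∑ n, a n * f m.succ n.succ) = L * q :=
    ⟨(∑ m, e m * ∑ n, a n * f m.succ n.succ) / L, by field_simp⟩
  obtain ⟨s, hs⟩ : ∃ s, (∑ m, e m * ∑ n, b n * f m.succ n.succ) = L * s :=
    ⟨(∑ m, e m * ∑ n, b n * f m.succ n.succ) / L, by field_simp⟩
  obtain ⟨w0, hw0⟩ : ∃ w0, (∑ n, e n * f 0 n.succ) = η0 * p + L * w0 :=
    ⟨((∑ n, e n * f 0 n.succ) - η0 * p) / L, by field_simp; ring⟩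
  have hBsym : ∀ P Q : Fin 3 → ℝ, (∑ m, P m * ∑ n, Q n * f m.succ n.succ)
      = (∑ m, Q m * ∑ n, P n * f m.succ n.succ) := by
    intro P Q
    simp only [Finset.mul_sum]
    rw [Finset.sum_comm]
    exact Finset.sum_congr rfl fun n _ => Finset.sum_congr rfl fun m _ => by
      rw [hfs m.succ n.succ]; ring
  have hge' : (∑ n, e n * f n.succ 0) = (∑ n, e n * f 0 n.succ) :=
    Finset.sum_congr rfl fun n _ => by rw [hfs n.succ 0]
  have hga' : (∑ n, a n * f n.succ 0) = (∑ n, a n * f 0 n.succ) :=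
    Finset.sum_congr rfl fun n _ => by rw [hfs n.succ 0]
  have hgb' : (∑ n, b n * f n.succ 0) = (∑ n, b n * f 0 n.succ) :=
    Finset.sum_congr rfl fun n _ => by rw [hfs n.succ 0]
  simp only [Fin.sum_univ_succ, Fin.sum_univ_zero, add_zero] at hee haa hbb hea heb hab
  have hpoly : ∀ x y : ℝ, x ^ 2 + y ^ 2 = r ^ 2 →
      (f 0 0 + k * (∑ n, e n * f 0 n.succ) + k * (∑ n, e n * f n.succ 0)
        + k ^ 2 * (∑ m, e m * ∑ n, e n * f m.succ n.succ))
      + ((∑ n, a n * f 0 n.succ) + (∑ n, a n * f n.succ 0)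
        + k * (∑ m, e m * ∑ n, a n * f m.succ n.succ)
        + k * (∑ m, a m * ∑ n, e n * f m.succ n.succ)) * x
      + ((∑ n, b n * f 0 n.succ) + (∑ n, b n * f n.succ 0)
        + k * (∑ m, e m * ∑ n, b n * f m.succ n.succ)
        + k * (∑ m, b m * ∑ n, e n * f m.succ n.succ)) * y
      + (∑ m, a m * ∑ n, a n * f m.succ n.succ) * x ^ 2
      + ((∑ m, a m * ∑ n, b n * f m.succ n.succ)
        + (∑ m, b m * ∑ n, a n * f m.succ n.succ)) * (x * y)
      + (∑ m, b m * ∑ n, b n * f m.succ n.succ) * y ^ 2 = 0 := by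
    intro x y hxy
    have h1 : (∑ i, (k * e i + x * a i + y * b i) ^ 2) = 1 := by
      simp only [Fin.sum_univ_succ, Fin.sum_univ_zero, add_zero]
      linear_combination (k ^ 2) * hee + (x ^ 2) * haa + (y ^ 2) * hbb
        + (2 * (k * x)) * hea + (2 * (k * y)) * heb + (2 * (x * y)) * hab + hxy + hr2
    have h2 : η0 + ∑ i, η' i * (k * e i + x * a i + y * b i) = 0 := by
      simp only [hLe, Fin.sum_univ_succ, Fin.sum_univ_zero, add_zero]
      linear_combination (L * k) * hee + (L * x) * hea + (L * y) * heb + hk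
    have hH := H (fun i => k * e i + x * a i + y * b i) h1 h2
    simp only [Fin.sum_univ_succ, Fin.sum_univ_zero, add_zero, Fin.cons_zero, Fin.cons_succ] at hH
    simp only [Fin.sum_univ_succ, Fin.sum_univ_zero, add_zero]
    linear_combination hH
  obtain ⟨hC1, hC2, hC4, hC03, hC05⟩ := stmt6_circle5 _ _ _ _ _ _ r hr0 hpoly
  have e1 : f 0 0 + 2 * k * (∑ n, e n * f 0 n.succ)
      + k ^ 2 * (∑ m, e m * ∑ n, e n * f m.succ n.succ)
      + (∑ m, a m * ∑ n, a n * f m.succ n.succ) * r ^ 2 = 0 := by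
    linear_combination hC03 - k * hge'
  have e2 : (∑ n, a n * f 0 n.succ) + k * (∑ m, e m * ∑ n, a n * f m.succ n.succ) = 0 := by
    linear_combination (1/2 : ℝ) * hC1 - (1/2 : ℝ) * hga' - (k/2) * (hBsym a e)
  have e3 : (∑ n, b n * f 0 n.succ) + k * (∑ m, e m * ∑ n, b n * f m.succ n.succ) = 0 := by
    linear_combination (1/2 : ℝ) * hC2 - (1/2 : ℝ) * hgb' - (k/2) * (hBsym b e)
  have e4 : (∑ m, a m * ∑ n, b n * f m.succ n.succ) = 0 := by
    linear_combination (1/2 : ℝ) * hC4 - (1/2 : ℝ) * (hBsym b a)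
  have e5 : (∑ m, b m * ∑ n, b n * f m.succ n.succ)
      = (∑ m, a m * ∑ n, a n * f m.succ n.succ) := by
    have h0 : ((∑ m, a m * ∑ n, a n * f m.succ n.succ)
        - (∑ m, b m * ∑ n, b n * f m.succ n.succ)) * r ^ 2 = 0 := by
      linear_combination hC03 - hC05
    rcases mul_eq_zero.mp h0 with h | h
    · linarith [sub_eq_zero.mp h]
    · exact absurd h (by positivity)
  have ega : (∑ n, a n * f 0 n.succ) = η0 * q := by linear_combination e2 - k * hq - q * hk
  have egb : (∑ n, b n * f 0 n.succ) = η0 * s := by linear_combination e3 - k * hs - s * hk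
  have vae : (∑ m, a m * ∑ n, e n * f m.succ n.succ) = L * q := by
    linear_combination (hBsym a e) + hq
  have vbe : (∑ m, b m * ∑ n, e n * f m.succ n.succ) = L * s := by
    linear_combination (hBsym b e) + hs
  have vba : (∑ m, b m * ∑ n, a n * f m.succ n.succ) = 0 := by
    linear_combination (hBsym b a) + e4
  refine ⟨(∑ m, a m * ∑ n, a n * f m.succ n.succ),
    Fin.cons w0 (fun i => p * e i + q * a i + s * b i), ?_⟩
  intro j kk
  induction j using Fin.cases with
  | zero =>
    induction kk using Fin.cases with
    | zero =>
      simp only [Matrix.diagonal_apply_eq, Fin.cons_zero]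
      linear_combination e1 - k ^ 2 * hp - 2 * k * hw0
        - (∑ m, a m * ∑ n, a n * f m.succ n.succ) * hr2 - (2 * (k * p) + 2 * w0) * hk
    | succ i =>
      rw [Matrix.diagonal_apply_ne _ (Fin.succ_ne_zero i).symm]
      simp only [Fin.cons_zero, Fin.cons_succ]
      have h1 : f 0 i.succ = (∑ n, e n * f 0 n.succ) * e i + (∑ n, a n * f 0 n.succ) * a i
          + (∑ n, b n * f 0 n.succ) * b i := hcompl (fun m => f 0 m.succ) i
      linear_combination h1 + (e i) * hw0 + (a i) * ega + (b i) * egb - w0 * (hLe i)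
  | succ i =>
    induction kk using Fin.cases with
    | zero =>
      rw [Matrix.diagonal_apply_ne _ (Fin.succ_ne_zero i), hfs i.succ 0]
      simp only [Fin.cons_zero, Fin.cons_succ]
      have h1 : f 0 i.succ = (∑ n, e n * f 0 n.succ) * e i + (∑ n, a n * f 0 n.succ) * a i
          + (∑ n, b n * f 0 n.succ) * b i := hcompl (fun m => f 0 m.succ) i
      linear_combination h1 + (e i) * hw0 + (a i) * ega + (b i) * egb - w0 * (hLe i)
    | succ j =>
      have hd : (Matrix.diagonal (Fin.cons (-1) (fun _ : Fin 3 => 1))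
          : Matrix (Fin 4) (Fin 4) ℝ) i.succ j.succ = if i = j then (1:ℝ) else 0 := by
        simp [Matrix.diagonal_apply, Fin.succ_inj]
      rw [hd]
      simp only [Fin.cons_succ]
      have h1 : f i.succ j.succ = (∑ n, e n * f i.succ n.succ) * e j
          + (∑ n, a n * f i.succ n.succ) * a j
          + (∑ n, b n * f i.succ n.succ) * b j := hcompl (fun m => f i.succ m.succ) j
      have h2e : (∑ n, e n * f i.succ n.succ)
          = (∑ m, e m * ∑ n, e n * f m.succ n.succ) * e i
          + (∑ m, a m * ∑ n, e n * f m.succ n.succ) * a i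
          + (∑ m, b m * ∑ n, e n * f m.succ n.succ) * b i :=
        hcompl (fun m => ∑ n, e n * f m.succ n.succ) i
      have h2a : (∑ n, a n * f i.succ n.succ)
          = (∑ m, e m * ∑ n, a n * f m.succ n.succ) * e i
          + (∑ m, a m * ∑ n, a n * f m.succ n.succ) * a i
          + (∑ m, b m * ∑ n, a n * f m.succ n.succ) * b i :=
        hcompl (fun m => ∑ n, a n * f m.succ n.succ) i
      have h2b : (∑ n, b n * f i.succ n.succ)
          = (∑ m, e m * ∑ n, b n * f m.succ n.succ) * e i
          + (∑ m, a m * ∑ n, b n * f m.succ n.succ) * a i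
          + (∑ m, b m * ∑ n, b n * f m.succ n.succ) * b i :=
        hcompl (fun m => ∑ n, b n * f m.succ n.succ) i
      have hdel : (if i = j then (1:ℝ) else 0) = e i * e j + a i * a j + b i * b j := by
        have h := hcompl (fun m => if i = m then (1:ℝ) else 0) j
        simpa using h
      linear_combination h1 + (e j) * h2e + (a j) * h2a + (b j) * h2b
        + (e i * e j) * hp + (a i * e j) * vae + (b i * e j) * vbe
        + (e i * a j) * hq + (b i * a j) * vba + (e i * b j) * hs
        + (a i * b j) * e4 + (b i * b j) * e5
        - (∑ m, a m * ∑ n, a n * f m.succ n.succ) * hdel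
        - (p * e j + q * a j + s * b j) * (hLe i)
        - (p * e i + q * a i + s * b i) * (hLe j)

/-- For a space-like covector η = (η⁰, η'), a symmetric 2-tensor f
satisfies f_{jk} θ^j θ^k = 0 for all θ = (1, v) with v ∈ S¹_η if and only if
f = c g + η ⊗ w + w ⊗ η for some c ∈ ℝ, w ∈ ℝ⁴ (Lemma 9.1 of LOSU). -/
theorem stmt6 (η0 : ℝ) (η' : Fin 3 → ℝ) (hsp : η0 ^ 2 < ∑ i, η' i ^ 2)
    (g : Matrix (Fin 4) (Fin 4) ℝ)
    (hg : g = Matrix.diagonal (Fin.cons (-1) (fun _ : Fin 3 => 1)))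
    (f : Matrix (Fin 4) (Fin 4) ℝ) (hf : f.IsSymm) :
    (∀ v : Fin 3 → ℝ, (∑ i, v i ^ 2 = 1) → (η0 + ∑ i, η' i * v i = 0) →
        ∑ j, ∑ k, f j k * (Fin.cons 1 v : Fin 4 → ℝ) j * (Fin.cons 1 v : Fin 4 → ℝ) k = 0)
    ↔ ∃ (c : ℝ) (w : Fin 4 → ℝ), ∀ j k,
        f j k = c * g j k + (Fin.cons η0 η' : Fin 4 → ℝ) j * w k + w j * (Fin.cons η0 η' : Fin 4 → ℝ) k := by
  subst hg
  have hn2 : 0 < ∑ i, η' i ^ 2 := lt_of_le_of_lt (sq_nonneg η0) hsp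
  have hfs : ∀ x y, f x y = f y x := fun x y => congrFun (congrFun hf y) x
  constructor
  · intro H
    set L := Real.sqrt (∑ i, η' i ^ 2) with hLdef
    have hL0 : 0 < L := Real.sqrt_pos.mpr hn2
    have hL2 : L ^ 2 = ∑ i, η' i ^ 2 := Real.sq_sqrt hn2.le
    set V : EuclideanSpace ℝ (Fin 3) := (EuclideanSpace.equiv (Fin 3) ℝ).symm η' with hV
    have hnorm : ‖V‖ = L := by
      rw [EuclideanSpace.norm_eq]
      congr 1
      exact Finset.sum_congr rfl fun i _ => by
        rw [show V i = η' i from rfl, Real.norm_eq_abs, sq_abs]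
    set e₀ : EuclideanSpace ℝ (Fin 3) := L⁻¹ • V with he₀
    have hne : ‖e₀‖ = 1 := by
      rw [he₀, norm_smul, hnorm, norm_inv, Real.norm_eq_abs, abs_of_pos hL0]
      field_simp
    have ho : Orthonormal ℝ (({0} : Set (Fin 3)).restrict (fun _ : Fin 3 => e₀)) := by
      constructor
      · intro i; exact hne
      · intro i j hij
        exact absurd (Subtype.ext (i.2.trans j.2.symm)) hij
    obtain ⟨u, hu⟩ := ho.exists_orthonormalBasis_extension_of_card_eq (by simp)
    have hu0 : ∀ m, u 0 m = L⁻¹ * η' m := by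
      intro m
      rw [hu 0 rfl, he₀]
      rfl
    have horth : ∀ i j : Fin 3, (∑ m, u i m * u j m) = if i = j then 1 else 0 := by
      intro i j
      have h := orthonormal_iff_ite.mp u.orthonormal i j
      simpa [PiLp.inner_apply, RCLike.inner_apply, mul_comm] using h
    have hcompl : ∀ (x : Fin 3 → ℝ) (m : Fin 3),
        x m = (∑ n, u 0 n * x n) * u 0 m + (∑ n, u 1 n * x n) * u 1 m
          + (∑ n, u 2 n * x n) * u 2 m := by
      intro x m
      have h := u.sum_repr' (WithLp.toLp 2 x)
      have h2 := congrFun (congrArg (fun z : EuclideanSpace ℝ (Fin 3) => (z : Fin 3 → ℝ)) h) m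
      simp only [Finset.sum_apply, PiLp.add_apply, PiLp.smul_apply, smul_eq_mul,
        PiLp.inner_apply, RCLike.inner_apply, starRingEnd_apply, star_trivial,
        PiLp.toLp_apply, Fin.sum_univ_three] at h2
      simp only [Fin.sum_univ_three]
      linarith [h2]
    have hLe : ∀ i, η' i = L * u 0 i := by
      intro i
      rw [hu0 i]
      field_simp
    refine stmt6_forward η0 L η' (fun m => u 0 m) (fun m => u 1 m) (fun m => u 2 m) f hfs hL0
      (by rw [hL2]; exact hsp) hLe ?_ ?_ ?_ ?_ ?_ ?_ (fun x m => hcompl x m) H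
    · simpa using horth 0 0
    · simpa using horth 1 1
    · simpa using horth 2 2
    · simpa using horth 0 1
    · simpa using horth 0 2
    · simpa using horth 1 2
  · rintro ⟨c, w, hw⟩ v hv1 hv2
    simp only [Fin.sum_univ_succ, Fin.sum_univ_zero, add_zero, Fin.cons_zero, Fin.cons_succ]
      at hv1 hv2 ⊢
    simp only [hw, Fin.cons_zero, Fin.cons_succ, Matrix.diagonal_apply, Fin.ext_iff,
      Fin.val_succ, Fin.val_zero, Fin.cons_succ, Fin.cons_zero]
    norm_num
    norm_num at hv1 hv2
    linear_combination c * hv1 + (2 * (w 0 + w 1 * v 0 + w 2 * v 1 + w (Fin.succ 2) * v 2)) * hv2
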